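/- (State error of finite imaginary-time evolution, nondegenerate case.) Fix d ≥ 2, E : Fin d → ℝ, and a distinguished index k₀ with E_{k₀} < E_k for all k ≠ k₀ (nondegenerate ground state); let Δ := min_{k ≠ k₀}(E_k − E_{k₀}) > 0. Let c : Fin d → ℂ with Σ_k |c_k|² = 1 and p₀ := |c_{k₀}|² > 0, and for β ≥ 0 let v(β) ∈ ℂ^d have components v(β)_k = c_k·e^{−βE_k}. Let w ∈ ℂ^d be the vector with w_{k₀} = c_{k₀}/|c_{k₀}| and w_k = 0 for k ≠ k₀. Then ‖v(β)/‖v(β)‖ − w‖ = sqrt( 2 − 2·(1 + Σ_{k≠k₀}(|c_k|²/p₀)·e^{−2β(E_k − E_{k₀})})^{−1/2} ) ≤ sqrt( 2 − 2·(1 + ((1 − p₀)/p₀)·e^{−2βΔ})^{−1/2} ). -/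

import Mathlib

/-- The unnormalized imaginary-time coordinate vector `v(β) ∈ ℂ^d`,
`v(β)_k = c_k·e^{−β·E_k}`, as an element of Euclidean space. -/
noncomputable def iteVec {d : ℕ} (E : Fin d → ℝ) (c : Fin d → ℂ) (β : ℝ) :
    EuclideanSpace ℂ (Fin d) :=
  (WithLp.equiv 2 (Fin d → ℂ)).symm fun k => c k * Real.exp (-(β * E k))

open Classical in
/-- The phase-matched ground eigenstate `w ∈ ℂ^d`, with `w_{k₀} = c_{k₀}/|c_{k₀}|` and
`w_k = 0` for `k ≠ k₀`. -/
noncomputable def groundPhaseVec {d : ℕ} (c : Fin d → ℂ) (k₀ : Fin d) :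
    EuclideanSpace ℂ (Fin d) :=
  (WithLp.equiv 2 (Fin d → ℂ)).symm fun k => if k = k₀ then c k₀ / (‖c k₀‖ : ℂ) else 0

set_option maxHeartbeats 1000000 in
/-- State error of finite imaginary-time evolution, nondegenerate case:
for `d ≥ 2`, a nondegenerate ground index `k₀` (`E_{k₀} < E_k` for `k ≠ k₀`), gap
`Δ = min_{k ≠ k₀}(E_k − E_{k₀}) > 0`, amplitudes `c` with `∑_k|c_k|² = 1` and
`p₀ = |c_{k₀}|² > 0`, and `β ≥ 0`, the state error satisfies
`‖v(β)/‖v(β)‖ − w‖ = √(2 − 2·(1 + ∑_{k≠k₀}(|c_k|²/p₀)·e^{−2β(E_k−E_{k₀})})^{−1/2})`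
and is bounded by `√(2 − 2·(1 + ((1−p₀)/p₀)·e^{−2βΔ})^{−1/2})`. -/
theorem finite_ite_state_error {d : ℕ} (hd : 2 ≤ d)
    (E : Fin d → ℝ) (k₀ : Fin d) (hground : ∀ k, k ≠ k₀ → E k₀ < E k)
    (Δ : ℝ) (hΔ : IsLeast ((fun k => E k - E k₀) '' {k | k ≠ k₀}) Δ) (hΔpos : 0 < Δ)
    (c : Fin d → ℂ) (hnorm : ∑ k, ‖c k‖ ^ 2 = 1) (hp₀ : 0 < ‖c k₀‖ ^ 2)
    (β : ℝ) (hβ : 0 ≤ β) :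
    ‖‖iteVec E c β‖⁻¹ • iteVec E c β - groundPhaseVec c k₀‖ =
      Real.sqrt (2 - 2 *
        (Real.sqrt (1 + ∑ k ∈ Finset.univ.erase k₀,
          (‖c k‖ ^ 2 / ‖c k₀‖ ^ 2) * Real.exp (-(2 * β * (E k - E k₀)))))⁻¹) ∧
    ‖‖iteVec E c β‖⁻¹ • iteVec E c β - groundPhaseVec c k₀‖ ≤
      Real.sqrt (2 - 2 *
        (Real.sqrt (1 + ((1 - ‖c k₀‖ ^ 2) / ‖c k₀‖ ^ 2) * Real.exp (-(2 * β * Δ))))⁻¹) := by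
  classical
  have hc0 : c k₀ ≠ 0 := by
    intro h; rw [h] at hp₀; simp at hp₀
  have hc0n : (0:ℝ) < ‖c k₀‖ := norm_pos_iff.mpr hc0
  have hekpos : ∀ k : Fin d, 0 < Real.exp (-(β * E k)) := fun k => Real.exp_pos _
  have hvk : ∀ k, iteVec E c β k = c k * ((Real.exp (-(β * E k)) : ℝ) : ℂ) := fun k => rfl
  have hwk : ∀ k, groundPhaseVec c k₀ k
      = if k = k₀ then c k₀ / (‖c k₀‖ : ℂ) else 0 := fun k => rfl
  have hvnk : ∀ k, ‖iteVec E c β k‖ = ‖c k‖ * Real.exp (-(β * E k)) := by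
    intro k
    rw [hvk, norm_mul, Complex.norm_real, Real.norm_eq_abs, abs_of_pos (hekpos k)]
  have hNsq : ‖iteVec E c β‖ ^ 2 = ∑ k, ‖c k‖ ^ 2 * Real.exp (-(β * E k)) ^ 2 := by
    rw [EuclideanSpace.norm_eq, Real.sq_sqrt (Finset.sum_nonneg fun i _ => sq_nonneg _)]
    exact Finset.sum_congr rfl fun k _ => by rw [hvnk, mul_pow]
  have hNpos : 0 < ‖iteVec E c β‖ := by
    have h0 : iteVec E c β k₀ ≠ 0 := by
      rw [hvk]
      exact mul_ne_zero hc0 (Complex.ofReal_ne_zero.mpr (Real.exp_ne_zero _))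
    refine norm_pos_iff.mpr fun h => h0 ?_
    rw [h]; rfl
  have hNne : ‖iteVec E c β‖ ≠ 0 := ne_of_gt hNpos
  have hcne : ‖c k₀‖ ≠ 0 := ne_of_gt hc0n
  -- squared error equals 2 - 2 t
  have hkey : ‖‖iteVec E c β‖⁻¹ • iteVec E c β - groundPhaseVec c k₀‖ ^ 2 =
      2 - 2 * (‖c k₀‖ * Real.exp (-(β * E k₀)) / ‖iteVec E c β‖) := by
    rw [EuclideanSpace.norm_eq, Real.sq_sqrt (Finset.sum_nonneg fun i _ => sq_nonneg _)]
    have hsum : ∀ k, ‖(‖iteVec E c β‖⁻¹ • iteVec E c β - groundPhaseVec c k₀) k‖ ^ 2 =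
        if k = k₀ then
          ‖c k₀‖ ^ 2 * (‖iteVec E c β‖⁻¹ * Real.exp (-(β * E k₀)) - ‖c k₀‖⁻¹) ^ 2
        else ‖iteVec E c β‖⁻¹ ^ 2 * (‖c k‖ ^ 2 * Real.exp (-(β * E k)) ^ 2) := by
      intro k
      have happ : (‖iteVec E c β‖⁻¹ • iteVec E c β - groundPhaseVec c k₀) k
          = ((‖iteVec E c β‖⁻¹ : ℝ) : ℂ) * iteVec E c β k - groundPhaseVec c k₀ k := rfl
      rw [happ, hvk, hwk]
      by_cases hk : k = k₀
      · subst hk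
        simp only [if_pos rfl, if_true, eq_self_iff_true]
        have hrw : ((‖iteVec E c β‖⁻¹ : ℝ) : ℂ) * (c k * ((Real.exp (-(β * E k)) : ℝ) : ℂ))
            - c k / (‖c k‖ : ℂ) =
            c k * (((‖iteVec E c β‖⁻¹ * Real.exp (-(β * E k)) - ‖c k‖⁻¹ : ℝ)) : ℂ) := by
          have : (‖c k‖ : ℂ) ≠ 0 := Complex.ofReal_ne_zero.mpr (ne_of_gt hc0n)
          push_cast
          field_simp
        rw [hrw, norm_mul, Complex.norm_real, Real.norm_eq_abs, mul_pow, sq_abs]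
      · simp only [if_neg hk, sub_zero]
        rw [norm_mul, norm_mul, Complex.norm_real, Complex.norm_real, Real.norm_eq_abs,
          Real.norm_eq_abs, abs_of_pos (inv_pos.mpr hNpos), abs_of_pos (hekpos k)]
        ring
    rw [Finset.sum_congr rfl fun k _ => hsum k,
      ← Finset.add_sum_erase _ _ (Finset.mem_univ k₀), if_pos rfl,
      Finset.sum_congr rfl fun k hk => if_neg (Finset.ne_of_mem_erase hk)]
    have herase : ∑ k ∈ Finset.univ.erase k₀,
        ‖iteVec E c β‖⁻¹ ^ 2 * (‖c k‖ ^ 2 * Real.exp (-(β * E k)) ^ 2) =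
        ‖iteVec E c β‖⁻¹ ^ 2 *
          ∑ k ∈ Finset.univ.erase k₀, ‖c k‖ ^ 2 * Real.exp (-(β * E k)) ^ 2 :=
      by rw [Finset.mul_sum]
    have htot : ‖c k₀‖ ^ 2 * Real.exp (-(β * E k₀)) ^ 2 +
        ∑ k ∈ Finset.univ.erase k₀, ‖c k‖ ^ 2 * Real.exp (-(β * E k)) ^ 2 =
        ‖iteVec E c β‖ ^ 2 := by
      rw [hNsq]
      exact Finset.add_sum_erase Finset.univ
        (fun k => ‖c k‖ ^ 2 * Real.exp (-(β * E k)) ^ 2) (Finset.mem_univ k₀)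
    have expandgen : ∀ a N e : ℝ, a ≠ 0 → N ≠ 0 →
        a ^ 2 * (N⁻¹ * e - a⁻¹) ^ 2 = N⁻¹ ^ 2 * (a ^ 2 * e ^ 2) - 2 * (a * e / N) + 1 := by
      intro a N e ha hN
      field_simp
      ring
    have expand := expandgen ‖c k₀‖ ‖iteVec E c β‖ (Real.exp (-(β * E k₀))) hcne hNne
    rw [expand, herase]
    have hN2 : ‖iteVec E c β‖⁻¹ ^ 2 *
        (∑ k ∈ Finset.univ.erase k₀, ‖c k‖ ^ 2 * Real.exp (-(β * E k)) ^ 2) =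
        1 - ‖iteVec E c β‖⁻¹ ^ 2 * (‖c k₀‖ ^ 2 * Real.exp (-(β * E k₀)) ^ 2) := by
      have h1 : ‖iteVec E c β‖⁻¹ ^ 2 * ‖iteVec E c β‖ ^ 2 = 1 := by
        field_simp
      nlinarith [htot]
    rw [hN2]
    ring
  -- identify t with the inverse square root expression
  have hS : 1 + ∑ k ∈ Finset.univ.erase k₀,
      (‖c k‖ ^ 2 / ‖c k₀‖ ^ 2) * Real.exp (-(2 * β * (E k - E k₀))) =
      ‖iteVec E c β‖ ^ 2 / (‖c k₀‖ ^ 2 * Real.exp (-(β * E k₀)) ^ 2) := by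
    have hterm : ∀ k, (‖c k‖ ^ 2 / ‖c k₀‖ ^ 2) * Real.exp (-(2 * β * (E k - E k₀))) =
        ‖c k‖ ^ 2 * Real.exp (-(β * E k)) ^ 2 /
          (‖c k₀‖ ^ 2 * Real.exp (-(β * E k₀)) ^ 2) := by
      intro k
      have h1 : Real.exp (-(β * E k)) ^ 2 = Real.exp (-(2 * β * E k)) := by
        rw [← Real.exp_nat_mul]; ring_nf
      have h2 : Real.exp (-(β * E k₀)) ^ 2 = Real.exp (-(2 * β * E k₀)) := by
        rw [← Real.exp_nat_mul]; ring_nf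
      have h3 : Real.exp (-(2 * β * (E k - E k₀))) =
          Real.exp (-(2 * β * E k)) / Real.exp (-(2 * β * E k₀)) := by
        rw [← Real.exp_sub]; ring_nf
      rw [h1, h2, h3]
      have := (Real.exp_pos (-(2 * β * E k₀))).ne'
      field_simp
    rw [Finset.sum_congr rfl fun k _ => hterm k, ← Finset.sum_div]
    rw [eq_div_iff (by positivity), add_mul, one_mul, div_mul_cancel₀ _ (by positivity), hNsq]
    exact Finset.add_sum_erase Finset.univ
      (fun k => ‖c k‖ ^ 2 * Real.exp (-(β * E k)) ^ 2) (Finset.mem_univ k₀)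
  have hsqrtS : Real.sqrt (1 + ∑ k ∈ Finset.univ.erase k₀,
      (‖c k‖ ^ 2 / ‖c k₀‖ ^ 2) * Real.exp (-(2 * β * (E k - E k₀)))) =
      ‖iteVec E c β‖ / (‖c k₀‖ * Real.exp (-(β * E k₀))) := by
    rw [hS, ← mul_pow, Real.sqrt_div (sq_nonneg _), Real.sqrt_sq hNpos.le,
      Real.sqrt_sq (by positivity)]
  have hinv : (Real.sqrt (1 + ∑ k ∈ Finset.univ.erase k₀,
      (‖c k‖ ^ 2 / ‖c k₀‖ ^ 2) * Real.exp (-(2 * β * (E k - E k₀)))))⁻¹ =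
      ‖c k₀‖ * Real.exp (-(β * E k₀)) / ‖iteVec E c β‖ := by
    rw [hsqrtS, inv_div]
  have heq : ‖‖iteVec E c β‖⁻¹ • iteVec E c β - groundPhaseVec c k₀‖ =
      Real.sqrt (2 - 2 * (Real.sqrt (1 + ∑ k ∈ Finset.univ.erase k₀,
        (‖c k‖ ^ 2 / ‖c k₀‖ ^ 2) * Real.exp (-(2 * β * (E k - E k₀)))))⁻¹) := by
    rw [← Real.sqrt_sq (norm_nonneg
      (‖iteVec E c β‖⁻¹ • iteVec E c β - groundPhaseVec c k₀)), hkey, hinv]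
  refine ⟨heq, ?_⟩
  rw [heq]
  apply Real.sqrt_le_sqrt
  have hrest : ∑ k ∈ Finset.univ.erase k₀, ‖c k‖ ^ 2 = 1 - ‖c k₀‖ ^ 2 := by
    have h : ‖c k₀‖ ^ 2 + ∑ k ∈ Finset.univ.erase k₀, ‖c k‖ ^ 2 = 1 := by
      rw [Finset.add_sum_erase Finset.univ (fun k => ‖c k‖ ^ 2) (Finset.mem_univ k₀)]
      exact hnorm
    linarith
  have hSle : 1 + ∑ k ∈ Finset.univ.erase k₀,
      (‖c k‖ ^ 2 / ‖c k₀‖ ^ 2) * Real.exp (-(2 * β * (E k - E k₀))) ≤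
      1 + (1 - ‖c k₀‖ ^ 2) / ‖c k₀‖ ^ 2 * Real.exp (-(2 * β * Δ)) := by
    apply add_le_add_right
    calc ∑ k ∈ Finset.univ.erase k₀,
        (‖c k‖ ^ 2 / ‖c k₀‖ ^ 2) * Real.exp (-(2 * β * (E k - E k₀)))
        ≤ ∑ k ∈ Finset.univ.erase k₀,
          (‖c k‖ ^ 2 / ‖c k₀‖ ^ 2) * Real.exp (-(2 * β * Δ)) := by
          refine Finset.sum_le_sum fun k hk => ?_
          have hkne : k ≠ k₀ := Finset.ne_of_mem_erase hk
          have hΔk : Δ ≤ E k - E k₀ := hΔ.2 ⟨k, hkne, rfl⟩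
          have : -(2 * β * (E k - E k₀)) ≤ -(2 * β * Δ) := by nlinarith
          exact mul_le_mul_of_nonneg_left (Real.exp_le_exp.mpr this) (by positivity)
      _ = (1 - ‖c k₀‖ ^ 2) / ‖c k₀‖ ^ 2 * Real.exp (-(2 * β * Δ)) := by
          rw [← Finset.sum_mul, ← Finset.sum_div, hrest]
  have hS1 : (1:ℝ) ≤ 1 + ∑ k ∈ Finset.univ.erase k₀,
      (‖c k‖ ^ 2 / ‖c k₀‖ ^ 2) * Real.exp (-(2 * β * (E k - E k₀))) :=
    le_add_of_nonneg_right (Finset.sum_nonneg fun k _ => by positivity)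
  have hsqrtpos : 0 < Real.sqrt (1 + ∑ k ∈ Finset.univ.erase k₀,
      (‖c k‖ ^ 2 / ‖c k₀‖ ^ 2) * Real.exp (-(2 * β * (E k - E k₀)))) :=
    Real.sqrt_pos.mpr (by linarith)
  have hmono : (Real.sqrt (1 + (1 - ‖c k₀‖ ^ 2) / ‖c k₀‖ ^ 2 *
      Real.exp (-(2 * β * Δ))))⁻¹ ≤ (Real.sqrt (1 + ∑ k ∈ Finset.univ.erase k₀,
      (‖c k‖ ^ 2 / ‖c k₀‖ ^ 2) * Real.exp (-(2 * β * (E k - E k₀)))))⁻¹ := by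
    apply inv_anti₀ hsqrtpos
    exact Real.sqrt_le_sqrt hSle
  linarith
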